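/- Let L = ⋃_{k=0}^{m−1} (x_k + Γ) be a point packing generated by a lattice Γ ⊆ ℝ^d, and suppose R is a similarity isometry of L with β ∈ Scal_L(R). Then R is a similarity isometry of Γ, and for every k there exist n distinct indices j_1, …, j_n ∈ {0,…,m−1}, where n = [βRΓ : (Γ ∩ βRΓ)], such that βRx_k − x_{j_i} ∈ Γ + βRΓ for all i. -/

import Mathlib

/-- Theorem 3.2 (forward direction): if βRL ⊆ L for a point packing L, then R is a
similarity isometry of Γ and each component of βRL meets exactly
n = [βRΓ : (Γ ∩ βRΓ)] components of L. -/
theorem stmt6 (d m : ℕ) (hm : 0 < m)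
    (Γ : Submodule ℤ (EuclideanSpace ℝ (Fin d)))
    [DiscreteTopology Γ] [IsZLattice ℝ Γ]
    (x : Fin m → EuclideanSpace ℝ (Fin d))
    (h0 : x ⟨0, hm⟩ = 0)
    (hdist : ∀ k1 k2 : Fin m, k1 ≠ k2 → x k1 - x k2 ∉ Γ)
    (L : Set (EuclideanSpace ℝ (Fin d)))
    (hL : L = ⋃ k : Fin m, (fun γ => x k + γ) '' (Γ : Set (EuclideanSpace ℝ (Fin d))))
    (R : EuclideanSpace ℝ (Fin d) ≃ₗᵢ[ℝ] EuclideanSpace ℝ (Fin d))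
    (β : ℝ) (hβ : 0 < β)
    (hsub : (fun v => β • R v) '' L ⊆ L) :
    (∃ β' > (0 : ℝ), ∀ γ ∈ Γ, β' • R γ ∈ Γ) ∧
    ∀ k : Fin m, ∃ J : Finset (Fin m),
      J.card = Γ.toAddSubgroup.relIndex
        (Γ.map ((β • (R.toLinearEquiv.toLinearMap :
          EuclideanSpace ℝ (Fin d) →ₗ[ℝ] EuclideanSpace ℝ (Fin d))).restrictScalars
          ℤ)).toAddSubgroup ∧
      ∀ j ∈ J, ∃ γ ∈ Γ, ∃ γ' ∈ Γ, β • R (x k) - x j = γ + β • R γ' := by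
  classical
  have hmem : ∀ v : EuclideanSpace ℝ (Fin d), v ∈ L ↔ ∃ k : Fin m, v - x k ∈ Γ := by
    intro v
    rw [hL]
    simp only [Set.mem_iUnion, Set.mem_image, SetLike.mem_coe]
    constructor
    · rintro ⟨k, γ, hγ, rfl⟩
      exact ⟨k, by simpa using hγ⟩
    · rintro ⟨k, hk⟩
      exact ⟨k, v - x k, hk, by abel⟩
  have key : ∀ (v1 v2 : EuclideanSpace ℝ (Fin d)) (j1 j2 : Fin m),
      v1 - x j1 ∈ Γ → v2 - x j2 ∈ Γ → v1 - v2 ∈ Γ → j1 = j2 := by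
    intro v1 v2 j1 j2 h1 h2 h12
    by_contra hne
    refine hdist j1 j2 hne ?_
    have hx : x j1 - x j2 = (v1 - v2) - (v1 - x j1) + (v2 - x j2) := by abel
    rw [hx]
    exact Submodule.add_mem _ (Submodule.sub_mem _ h12 h1) h2
  have hΓL : ∀ γ ∈ Γ, γ ∈ L := by
    intro γ hγ
    rw [hmem]
    exact ⟨⟨0, hm⟩, by rw [h0]; simpa using hγ⟩
  have hβL : ∀ v ∈ L, β • R v ∈ L := fun v hv => hsub ⟨v, hv, rfl⟩
  constructor
  · -- Part 1
    set S : AddSubgroup Γ :=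
      { carrier := {γ : Γ | β • R (γ : EuclideanSpace ℝ (Fin d)) ∈ Γ}
        zero_mem' := by simp
        add_mem' := by
          intro a b ha hb
          simp only [Set.mem_setOf_eq] at *
          rw [Submodule.coe_add, map_add, smul_add]
          exact Submodule.add_mem _ ha hb
        neg_mem' := by
          intro a ha
          simp only [Set.mem_setOf_eq] at *
          rw [Submodule.coe_neg, map_neg, smul_neg]
          exact Submodule.neg_mem _ ha } with hSdef
    have hex1 : ∀ γ : Γ, ∃ j : Fin m, β • R (γ : EuclideanSpace ℝ (Fin d)) - x j ∈ Γ := by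
      intro γ
      exact (hmem _).mp (hβL _ (hΓL γ γ.2))
    set f : Γ → Fin m := fun γ => (hex1 γ).choose with hfdef
    have hfspec : ∀ γ : Γ, β • R (γ : EuclideanSpace ℝ (Fin d)) - x (f γ) ∈ Γ :=
      fun γ => (hex1 γ).choose_spec
    have hsubR : ∀ γ1 γ2 : Γ, (β • R ((γ1 : EuclideanSpace ℝ (Fin d))) -
        β • R ((γ2 : EuclideanSpace ℝ (Fin d)))) = β • R ((γ1 - γ2 : Γ) : EuclideanSpace ℝ (Fin d)) := by
      intro γ1 γ2
      rw [Submodule.coe_sub, map_sub, smul_sub]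
    have hinj : ∀ γ1 γ2 : Γ, f γ1 = f γ2 → γ1 - γ2 ∈ S := by
      intro γ1 γ2 h
      have h1 := hfspec γ1
      have h2 := hfspec γ2
      rw [h] at h1
      show β • R ((γ1 - γ2 : Γ) : EuclideanSpace ℝ (Fin d)) ∈ Γ
      rw [← hsubR]
      have hx : β • R (γ1 : EuclideanSpace ℝ (Fin d)) - β • R (γ2 : EuclideanSpace ℝ (Fin d)) =
          (β • R (γ1 : EuclideanSpace ℝ (Fin d)) - x (f γ2)) -
          (β • R (γ2 : EuclideanSpace ℝ (Fin d)) - x (f γ2)) := by abel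
      rw [hx]
      exact Submodule.sub_mem _ h1 h2
    have hcongr : ∀ γ1 γ2 : Γ, γ1 - γ2 ∈ S → f γ1 = f γ2 := by
      intro γ1 γ2 h
      refine key (β • R (γ1 : EuclideanSpace ℝ (Fin d)))
        (β • R (γ2 : EuclideanSpace ℝ (Fin d))) _ _ (hfspec γ1) (hfspec γ2) ?_
      rw [hsubR]
      exact h
    let g : Γ ⧸ S → Fin m := Quotient.lift f (by
      intro a b hab
      have h1 : -a + b ∈ S := QuotientAddGroup.leftRel_apply.mp hab
      have h2 : a - b ∈ S := by
        have := S.neg_mem h1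
        simpa [neg_add_rev, sub_eq_add_neg, add_comm] using this
      exact hcongr a b h2)
    have hginj : Function.Injective g := by
      intro q1 q2
      induction q1 using Quotient.ind
      induction q2 using Quotient.ind
      rename_i a b
      intro h
      have hfab : f a = f b := h
      have : a - b ∈ S := hinj a b hfab
      exact Quotient.sound (QuotientAddGroup.leftRel_apply.mpr (by
        simpa [neg_add_eq_sub] using S.neg_mem this))
    have hfin : Finite (Γ ⧸ S) := Finite.of_injective g hginj
    have hSnormal : S.Normal := ⟨fun a ha g => by simpa [add_comm, add_assoc] using ha⟩
    have hidx : S.index ≠ 0 := AddSubgroup.index_ne_zero_of_finite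
    refine ⟨(S.index : ℝ) * β, by positivity, ?_⟩
    intro γ hγ
    have hmemS : S.index • (⟨γ, hγ⟩ : Γ) ∈ S := AddSubgroup.nsmul_index_mem S _
    have hval : β • R ((S.index • (⟨γ, hγ⟩ : Γ) : Γ) : EuclideanSpace ℝ (Fin d)) ∈ Γ := hmemS
    have hcoe : ((S.index • (⟨γ, hγ⟩ : Γ) : Γ) : EuclideanSpace ℝ (Fin d)) = S.index • γ := by
      simp
    have heq : β • R ((S.index • (⟨γ, hγ⟩ : Γ) : Γ) : EuclideanSpace ℝ (Fin d)) =
        ((S.index : ℝ) * β) • R γ := by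
      rw [hcoe, map_nsmul, smul_comm β, mul_smul, Nat.cast_smul_eq_nsmul ℝ]
    rw [← heq]
    exact hval
  · -- Part 2
    intro k
    set T := ((β • (R.toLinearEquiv.toLinearMap :
      EuclideanSpace ℝ (Fin d) →ₗ[ℝ] EuclideanSpace ℝ (Fin d))).restrictScalars ℤ) with hTdef
    have hTapp : ∀ v, T v = β • R v := fun v => rfl
    set Λ := Γ.map T with hΛdef
    set K := Λ.toAddSubgroup with hKdef
    set S2 := Γ.toAddSubgroup.addSubgroupOf K with hS2def
    have hexv : ∀ v : K, ∃ j : Fin m, (β • R (x k) + (v : EuclideanSpace ℝ (Fin d))) - x j ∈ Γ := by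
      intro v
      have hv2 : (v : EuclideanSpace ℝ (Fin d)) ∈ Λ := v.2
      obtain ⟨γ', hγ', hvγ⟩ := Submodule.mem_map.mp hv2
      have hxL : x k + γ' ∈ L := by
        rw [hmem]
        exact ⟨k, by simpa using hγ'⟩
      have := hβL _ hxL
      rw [hmem] at this
      obtain ⟨j, hj⟩ := this
      refine ⟨j, ?_⟩
      have hvR : β • R γ' = (v : EuclideanSpace ℝ (Fin d)) := by rw [← hTapp]; exact hvγ
      have : β • R (x k + γ') = β • R (x k) + (v : EuclideanSpace ℝ (Fin d)) := by
        rw [map_add, smul_add, hvR]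
      rwa [this] at hj
    set f2 : K → Fin m := fun v => (hexv v).choose with hf2def
    have hf2spec : ∀ v : K, (β • R (x k) + (v : EuclideanSpace ℝ (Fin d))) - x (f2 v) ∈ Γ :=
      fun v => (hexv v).choose_spec
    have hinj2 : ∀ v1 v2 : K, f2 v1 = f2 v2 → v1 - v2 ∈ S2 := by
      intro v1 v2 h
      have h1 := hf2spec v1
      have h2 := hf2spec v2
      rw [h] at h1
      have hx : ((v1 - v2 : K) : EuclideanSpace ℝ (Fin d)) =
          ((β • R (x k) + (v1 : EuclideanSpace ℝ (Fin d))) - x (f2 v2)) -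
          ((β • R (x k) + (v2 : EuclideanSpace ℝ (Fin d))) - x (f2 v2)) := by
        push_cast
        abel
      rw [AddSubgroup.mem_addSubgroupOf]
      show ((v1 - v2 : K) : EuclideanSpace ℝ (Fin d)) ∈ Γ
      rw [hx]
      exact Submodule.sub_mem _ h1 h2
    have hcongr2 : ∀ v1 v2 : K, v1 - v2 ∈ S2 → f2 v1 = f2 v2 := by
      intro v1 v2 h
      refine key _ _ _ _ (hf2spec v1) (hf2spec v2) ?_
      have : ((v1 - v2 : K) : EuclideanSpace ℝ (Fin d)) ∈ Γ := h
      have hx : (β • R (x k) + (v1 : EuclideanSpace ℝ (Fin d))) -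
          (β • R (x k) + (v2 : EuclideanSpace ℝ (Fin d))) =
          ((v1 - v2 : K) : EuclideanSpace ℝ (Fin d)) := by
        push_cast
        abel
      rw [hx]
      exact this
    let g2 : K ⧸ S2 → Fin m := Quotient.lift f2 (by
      intro a b hab
      have h1 : -a + b ∈ S2 := QuotientAddGroup.leftRel_apply.mp hab
      have h2 : a - b ∈ S2 := by
        have := S2.neg_mem h1
        simpa [neg_add_rev, sub_eq_add_neg, add_comm] using this
      exact hcongr2 a b h2)
    have hg2inj : Function.Injective g2 := by
      intro q1 q2
      induction q1 using Quotient.ind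
      induction q2 using Quotient.ind
      rename_i a b
      intro h
      have hfab : f2 a = f2 b := h
      have : a - b ∈ S2 := hinj2 a b hfab
      exact Quotient.sound (QuotientAddGroup.leftRel_apply.mpr (by
        simpa [neg_add_eq_sub] using S2.neg_mem this))
    have hfin2 : Finite (K ⧸ S2) := Finite.of_injective g2 hg2inj
    have : Fintype (K ⧸ S2) := Fintype.ofFinite _
    refine ⟨Finset.image g2 Finset.univ, ?_, ?_⟩
    · rw [Finset.card_image_of_injective _ hg2inj, Finset.card_univ]
      rw [AddSubgroup.relIndex]
      rw [AddSubgroup.index_eq_card]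
      exact (Nat.card_eq_fintype_card).symm
    · intro j hj
      obtain ⟨q, -, hq⟩ := Finset.mem_image.mp hj
      obtain ⟨v, rfl⟩ := Quotient.exists_rep q
      have hfv : f2 v = j := hq
      have hspec := hf2spec v
      rw [hfv] at hspec
      obtain ⟨γ', hγ', hvγ⟩ := Submodule.mem_map.mp (v.2 : (v : EuclideanSpace ℝ (Fin d)) ∈ Λ)
      refine ⟨_, hspec, -γ', Submodule.neg_mem _ hγ', ?_⟩
      have hv : β • R γ' = (v : EuclideanSpace ℝ (Fin d)) := by rw [← hTapp]; exact hvγ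
      rw [map_neg, smul_neg, hv]
      abel
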